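/- Let h ∈ K̄[x] be a monic polynomial over an algebraically closed valued field, let α ∈ K̄ and β ∈ K̄^×, and set h_{α,β}(x') := h(βx' + α). Let m (resp. n) be the lowest (resp. highest) degree appearing among the terms of a normalized reduction of h_{α,β}. Then m equals the number of roots z of h (counted with multiplicity) satisfying v(z − α) > v(β), and n equals the number of roots z of h (counted with multiplicity) satisfying v(z − α) ≥ v(β). -/

import Mathlib

open Polynomial
open scoped Classical

/-- An additive ℚ-valued valuation on a field `K`, recorded as a bare function with
the valuation axioms imposed only at nonzero elements (the value at `0` is junk). -/
structure AddVal (K : Type*) [Field K] where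
  v : K → ℚ
  map_one : v 1 = 0
  map_mul : ∀ x y : K, x ≠ 0 → y ≠ 0 → v (x * y) = v x + v y
  add_ge : ∀ x y : K, x ≠ 0 → y ≠ 0 → x + y ≠ 0 → min (v x) (v y) ≤ v (x + y)

variable {K : Type*} [Field K]

/-- The Gauss valuation of a polynomial: the minimum of the valuations of its
(nonzero) coefficients, with junk value `0` at the zero polynomial. -/
noncomputable def AddVal.gauss (w : AddVal K) (h : K[X]) : ℚ :=
  if hh : h = 0 then 0
  else h.support.inf' (Polynomial.support_nonempty.mpr hh) fun i => w.v (h.coeff i)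

/-- Gauss valuation valued in `ℚ ∪ {∞}`, taking the value `⊤` at the zero polynomial. -/
noncomputable def AddVal.gaussT (w : AddVal K) (h : K[X]) : WithTop ℚ :=
  if h = 0 then ⊤ else (w.gauss h : WithTop ℚ)

/-- The quantity `t = v(ρ) - v(h) ∈ ℚ ∪ {∞}` attached to a
part-`p`-th-power decomposition `h = q^p + ρ` (it is `⊤` when `ρ = 0`). -/
noncomputable def AddVal.tdiff (w : AddVal K) (h ρ : K[X]) : WithTop ℚ :=
  if ρ = 0 then ⊤ else ((w.gauss ρ - w.gauss h : ℚ) : WithTop ℚ)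

/-- `h = q ^ p + ρ` is a part-`p`-th-power decomposition (`deg q ≤ ⌊deg h / p⌋`). -/
def IsPartDecomp (p : ℕ) (h q ρ : K[X]) : Prop :=
  h = q ^ p + ρ ∧ q.natDegree ≤ h.natDegree / p

/-- The threshold `p·v(p)/(p-1)`. -/
noncomputable def pBound (w : AddVal K) (p : ℕ) : ℚ :=
  (p : ℚ) * w.v (p : K) / ((p : ℚ) - 1)

/-- A part-`p`-th-power decomposition is good if `t ≥ p·v(p)/(p-1)` or if no
decomposition achieves a strictly larger value of `t = v(ρ) - v(h)`. -/
def IsGoodDecomp (w : AddVal K) (p : ℕ) (h q ρ : K[X]) : Prop :=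
  IsPartDecomp p h q ρ ∧
    (((pBound w p : ℚ) : WithTop ℚ) ≤ w.tdiff h ρ ∨
      ∀ q₁ ρ₁ : K[X], IsPartDecomp p h q₁ ρ₁ → w.tdiff h ρ₁ ≤ w.tdiff h ρ)

namespace AddVal

lemma v_neg (w : AddVal K) {x : K} (hx : x ≠ 0) : w.v (-x) = w.v x := by
  have h1 : w.v (-1 : K) = 0 := by
    have h := w.map_mul (-1) (-1) (by norm_num) (by norm_num)
    rw [neg_mul_neg, one_mul, w.map_one] at h
    linarith
  have hx' : (-x) = (-1) * x := by ring
  rw [hx', w.map_mul _ _ (by norm_num) hx, h1, zero_add]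

lemma v_add_eq (w : AddVal K) {a b : K} (ha : a ≠ 0)
    (hb : b = 0 ∨ (b ≠ 0 ∧ w.v a < w.v b)) :
    a + b ≠ 0 ∧ w.v (a + b) = w.v a := by
  rcases hb with rfl | ⟨hb0, hlt⟩
  · simpa using ha
  · have hne : a + b ≠ 0 := by
      intro hz
      have : b = -a := by linear_combination hz
      rw [this, w.v_neg ha] at hlt
      exact lt_irrefl _ hlt
    refine ⟨hne, ?_⟩
    have h1 : min (w.v a) (w.v b) ≤ w.v (a + b) := w.add_ge a b ha hb0 hne
    rw [min_eq_left hlt.le] at h1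
    have h3 : min (w.v (a + b)) (w.v (-b)) ≤ w.v a := by
      have h := w.add_ge (a + b) (-b) hne (neg_ne_zero.mpr hb0) (by simpa using ha)
      simpa using h
    rw [w.v_neg hb0] at h3
    rcases min_le_iff.mp h3 with h | h
    · linarith
    · linarith

lemma sum_ge (w : AddVal K) {ι : Type*} {s : Finset ι} {f : ι → K} {t : ℚ}
    (hf : ∀ i ∈ s, f i = 0 ∨ t ≤ w.v (f i)) :
    (∑ i ∈ s, f i) = 0 ∨ t ≤ w.v (∑ i ∈ s, f i) := by
  classical
  induction s using Finset.cons_induction with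
  | empty => simp
  | cons a s ha ih =>
    rw [Finset.sum_cons]
    have hfa := hf a (Finset.mem_cons_self a s)
    have hrest := ih fun i hi => hf i (Finset.mem_cons_of_mem hi)
    by_cases hf0 : f a = 0
    · rw [hf0, zero_add]; exact hrest
    by_cases hs0 : (∑ i ∈ s, f i) = 0
    · rw [hs0, add_zero]; right; exact hfa.resolve_left hf0
    by_cases hsum : f a + ∑ i ∈ s, f i = 0
    · left; exact hsum
    · right
      exact le_trans (le_min (hfa.resolve_left hf0) (hrest.resolve_left hs0))
        (w.add_ge _ _ hf0 hs0 hsum)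

lemma sum_gt (w : AddVal K) {ι : Type*} {s : Finset ι} {f : ι → K} {t : ℚ}
    (hf : ∀ i ∈ s, f i = 0 ∨ t < w.v (f i)) :
    (∑ i ∈ s, f i) = 0 ∨ t < w.v (∑ i ∈ s, f i) := by
  classical
  induction s using Finset.cons_induction with
  | empty => simp
  | cons a s ha ih =>
    rw [Finset.sum_cons]
    have hfa := hf a (Finset.mem_cons_self a s)
    have hrest := ih fun i hi => hf i (Finset.mem_cons_of_mem hi)
    by_cases hf0 : f a = 0
    · rw [hf0, zero_add]; exact hrest
    by_cases hs0 : (∑ i ∈ s, f i) = 0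
    · rw [hs0, add_zero]; right; exact hfa.resolve_left hf0
    by_cases hsum : f a + ∑ i ∈ s, f i = 0
    · left; exact hsum
    · right
      exact lt_of_lt_of_le (lt_min (hfa.resolve_left hf0) (hrest.resolve_left hs0))
        (w.add_ge _ _ hf0 hs0 hsum)

lemma gauss_le (w : AddVal K) {g : K[X]} (hg : g ≠ 0) {i : ℕ} (hi : g.coeff i ≠ 0) :
    w.gauss g ≤ w.v (g.coeff i) := by
  rw [AddVal.gauss, dif_neg hg]
  exact Finset.inf'_le _ (Polynomial.mem_support_iff.mpr hi)

lemma gauss_eq' (w : AddVal K) {g : K[X]} {s : ℚ} (hg : g ≠ 0)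
    (hlb : ∀ i, g.coeff i ≠ 0 → s ≤ w.v (g.coeff i))
    (hex : ∃ i, g.coeff i ≠ 0 ∧ w.v (g.coeff i) = s) : w.gauss g = s := by
  obtain ⟨i, hi, hvi⟩ := hex
  refine le_antisymm (hvi ▸ w.gauss_le hg hi) ?_
  rw [AddVal.gauss, dif_neg hg]
  exact Finset.le_inf' _ _ fun j hj => hlb j (Polynomial.mem_support_iff.mp hj)

end AddVal

/-- `m` and `n` are the least and greatest indices whose coefficient attains the
Gauss valuation of `g`. -/
def MinMax (w : AddVal K) (g : K[X]) (m n : ℕ) : Prop :=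
  (g.coeff m ≠ 0 ∧ w.v (g.coeff m) = w.gauss g) ∧
  (g.coeff n ≠ 0 ∧ w.v (g.coeff n) = w.gauss g) ∧
  ∀ i, g.coeff i ≠ 0 → w.v (g.coeff i) = w.gauss g → m ≤ i ∧ i ≤ n

lemma minMax_mul (w : AddVal K) {g₁ g₂ : K[X]} {m₁ n₁ m₂ n₂ : ℕ}
    (h1 : g₁ ≠ 0) (h2 : g₂ ≠ 0) (hq1 : MinMax w g₁ m₁ n₁) (hq2 : MinMax w g₂ m₂ n₂) :
    g₁ * g₂ ≠ 0 ∧ MinMax w (g₁ * g₂) (m₁ + m₂) (n₁ + n₂) := by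
  classical
  obtain ⟨⟨hm1c, hm1v⟩, ⟨hn1c, hn1v⟩, hbd1⟩ := hq1
  obtain ⟨⟨hm2c, hm2v⟩, ⟨hn2c, hn2v⟩, hbd2⟩ := hq2
  set s₁ := w.gauss g₁ with hs₁
  set s₂ := w.gauss g₂ with hs₂
  -- strict bounds off the attained range
  have strict1 : ∀ i, g₁.coeff i ≠ 0 → (i < m₁ ∨ n₁ < i) → s₁ < w.v (g₁.coeff i) := by
    intro i hi hout
    refine lt_of_le_of_ne (w.gauss_le h1 hi) fun he => ?_
    rcases hout with hlt | hgt
    · exact absurd (hbd1 i hi he.symm).1 (by omega)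
    · exact absurd (hbd1 i hi he.symm).2 (by omega)
  have strict2 : ∀ i, g₂.coeff i ≠ 0 → (i < m₂ ∨ n₂ < i) → s₂ < w.v (g₂.coeff i) := by
    intro i hi hout
    refine lt_of_le_of_ne (w.gauss_le h2 hi) fun he => ?_
    rcases hout with hlt | hgt
    · exact absurd (hbd2 i hi he.symm).1 (by omega)
    · exact absurd (hbd2 i hi he.symm).2 (by omega)
  -- term analysis
  have term_ge : ∀ x : ℕ × ℕ, g₁.coeff x.1 * g₂.coeff x.2 = 0 ∨
      s₁ + s₂ ≤ w.v (g₁.coeff x.1 * g₂.coeff x.2) := by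
    intro x
    by_cases hx1 : g₁.coeff x.1 = 0
    · left; rw [hx1, zero_mul]
    by_cases hx2 : g₂.coeff x.2 = 0
    · left; rw [hx2, mul_zero]
    right
    rw [w.map_mul _ _ hx1 hx2]
    exact add_le_add (w.gauss_le h1 hx1) (w.gauss_le h2 hx2)
  have term_gt : ∀ x : ℕ × ℕ, (x.1 < m₁ ∨ n₁ < x.1 ∨ x.2 < m₂ ∨ n₂ < x.2) →
      g₁.coeff x.1 * g₂.coeff x.2 = 0 ∨
      s₁ + s₂ < w.v (g₁.coeff x.1 * g₂.coeff x.2) := by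
    intro x hx
    by_cases hx1 : g₁.coeff x.1 = 0
    · left; rw [hx1, zero_mul]
    by_cases hx2 : g₂.coeff x.2 = 0
    · left; rw [hx2, mul_zero]
    right
    rw [w.map_mul _ _ hx1 hx2]
    rcases hx with h | h | h | h
    · exact add_lt_add_of_lt_of_le (strict1 _ hx1 (Or.inl h)) (w.gauss_le h2 hx2)
    · exact add_lt_add_of_lt_of_le (strict1 _ hx1 (Or.inr h)) (w.gauss_le h2 hx2)
    · exact add_lt_add_of_le_of_lt (w.gauss_le h1 hx1) (strict2 _ hx2 (Or.inl h))
    · exact add_lt_add_of_le_of_lt (w.gauss_le h1 hx1) (strict2 _ hx2 (Or.inr h))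
  -- coefficient at a "corner" index
  have corner : ∀ a b : ℕ, g₁.coeff a ≠ 0 → g₂.coeff b ≠ 0 →
      w.v (g₁.coeff a) = s₁ → w.v (g₂.coeff b) = s₂ →
      (∀ x : ℕ × ℕ, x ∈ Finset.HasAntidiagonal.antidiagonal (a + b) → x ≠ (a, b) →
        (x.1 < m₁ ∨ n₁ < x.1 ∨ x.2 < m₂ ∨ n₂ < x.2)) →
      (g₁ * g₂).coeff (a + b) ≠ 0 ∧ w.v ((g₁ * g₂).coeff (a + b)) = s₁ + s₂ := by
    intro a b hac hbc hav hbv hout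
    rw [Polynomial.coeff_mul]
    have hmem : ((a, b) : ℕ × ℕ) ∈ Finset.HasAntidiagonal.antidiagonal (a + b) := by
      simp [Finset.mem_antidiagonal]
    rw [← Finset.add_sum_erase _ _ hmem]
    have hmain : g₁.coeff a * g₂.coeff b ≠ 0 := mul_ne_zero hac hbc
    have hmainv : w.v (g₁.coeff a * g₂.coeff b) = s₁ + s₂ := by
      rw [w.map_mul _ _ hac hbc, hav, hbv]
    have hrest := w.sum_gt (s := (Finset.HasAntidiagonal.antidiagonal (a + b)).erase (a, b))
      (f := fun x => g₁.coeff x.1 * g₂.coeff x.2) (t := s₁ + s₂) ?_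
    · have hb : (∑ x ∈ (Finset.HasAntidiagonal.antidiagonal (a + b)).erase (a, b),
          g₁.coeff x.1 * g₂.coeff x.2) = 0 ∨
          ((∑ x ∈ (Finset.HasAntidiagonal.antidiagonal (a + b)).erase (a, b),
            g₁.coeff x.1 * g₂.coeff x.2) ≠ 0 ∧
          w.v (g₁.coeff a * g₂.coeff b) <
            w.v (∑ x ∈ (Finset.HasAntidiagonal.antidiagonal (a + b)).erase (a, b),
              g₁.coeff x.1 * g₂.coeff x.2)) := by
        rcases hrest with h | h
        · exact Or.inl h
        · by_cases hz : (∑ x ∈ (Finset.HasAntidiagonal.antidiagonal (a + b)).erase (a, b),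
              g₁.coeff x.1 * g₂.coeff x.2) = 0
          · exact Or.inl hz
          · exact Or.inr ⟨hz, hmainv ▸ h⟩
      have := w.v_add_eq hmain hb
      rw [hmainv] at this; exact this
    · intro x hx
      exact term_gt x (hout x (Finset.mem_of_mem_erase hx) (Finset.ne_of_mem_erase hx))
  have hcm : (g₁ * g₂).coeff (m₁ + m₂) ≠ 0 ∧
      w.v ((g₁ * g₂).coeff (m₁ + m₂)) = s₁ + s₂ := by
    refine corner m₁ m₂ hm1c hm2c hm1v hm2v fun x hx hne => ?_
    rw [Finset.HasAntidiagonal.mem_antidiagonal] at hx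
    rcases lt_trichotomy x.1 m₁ with h | h | h
    · exact Or.inl h
    · exact absurd (Prod.ext h (by omega)) hne
    · right; right; left; omega
  have hcn : (g₁ * g₂).coeff (n₁ + n₂) ≠ 0 ∧
      w.v ((g₁ * g₂).coeff (n₁ + n₂)) = s₁ + s₂ := by
    refine corner n₁ n₂ hn1c hn2c hn1v hn2v fun x hx hne => ?_
    rw [Finset.HasAntidiagonal.mem_antidiagonal] at hx
    rcases lt_trichotomy x.1 n₁ with h | h | h
    · right; right; right; omega
    · exact absurd (Prod.ext h (by omega)) hne
    · exact Or.inr (Or.inl h)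
  have hne : g₁ * g₂ ≠ 0 := fun hz => hcm.1 (by rw [hz, Polynomial.coeff_zero])
  have hgauss : w.gauss (g₁ * g₂) = s₁ + s₂ := by
    refine w.gauss_eq' hne (fun i hi => ?_) ⟨m₁ + m₂, hcm⟩
    have := w.sum_ge (s := Finset.HasAntidiagonal.antidiagonal i)
      (f := fun x => g₁.coeff x.1 * g₂.coeff x.2) (t := s₁ + s₂) fun x _ => term_ge x
    rw [← Polynomial.coeff_mul] at this
    exact this.resolve_left hi
  refine ⟨hne, ⟨hcm.1, hgauss ▸ hcm.2⟩, ⟨hcn.1, hgauss ▸ hcn.2⟩, fun i hi hvi => ?_⟩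
  rw [hgauss] at hvi
  constructor
  · by_contra hlt
    push_neg at hlt
    have := w.sum_gt (s := Finset.HasAntidiagonal.antidiagonal i)
      (f := fun x => g₁.coeff x.1 * g₂.coeff x.2) (t := s₁ + s₂) ?_
    · rw [← Polynomial.coeff_mul] at this
      rcases this with h | h
      · exact hi h
      · rw [hvi] at h; exact lt_irrefl _ h
    · intro x hx
      rw [Finset.HasAntidiagonal.mem_antidiagonal] at hx
      refine term_gt x ?_
      omega
  · by_contra hlt
    push_neg at hlt
    have := w.sum_gt (s := Finset.HasAntidiagonal.antidiagonal i)
      (f := fun x => g₁.coeff x.1 * g₂.coeff x.2) (t := s₁ + s₂) ?_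
    · rw [← Polynomial.coeff_mul] at this
      rcases this with h | h
      · exact hi h
      · rw [hvi] at h; exact lt_irrefl _ h
    · intro x hx
      rw [Finset.HasAntidiagonal.mem_antidiagonal] at hx
      refine term_gt x ?_
      omega

lemma coeff_linear (β c : K) (i : ℕ) :
    (C β * X + C c).coeff i = if i = 0 then c else if i = 1 then β else 0 := by
  rcases i with _ | _ | i <;>
    simp [Polynomial.coeff_add, Polynomial.coeff_C_mul, Polynomial.coeff_X, Polynomial.coeff_C]

lemma minMax_linear (w : AddVal K) {β : K} (c : K) (hβ : β ≠ 0) :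
    (C β * X + C c) ≠ 0 ∧
    MinMax w (C β * X + C c) (if c = 0 ∨ w.v β < w.v c then 1 else 0)
      (if c = 0 ∨ w.v β ≤ w.v c then 1 else 0) := by
  have hc1 : (C β * X + C c).coeff 1 = β := by rw [coeff_linear]; norm_num
  have hc0 : (C β * X + C c).coeff 0 = c := by rw [coeff_linear]; norm_num
  have hne : (C β * X + C c) ≠ 0 := fun hz => hβ (by rw [← hc1, hz, Polynomial.coeff_zero])
  refine ⟨hne, ?_⟩
  by_cases hc : c = 0
  · have hg : w.gauss (C β * X + C c) = w.v β := by
      refine w.gauss_eq' hne (fun i hi => ?_) ⟨1, by rw [hc1]; exact ⟨hβ, rfl⟩⟩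
      rw [coeff_linear] at hi
      rcases i with _ | _ | i <;> simp_all [hc1]
    rw [if_pos (Or.inl hc), if_pos (Or.inl hc)]
    refine ⟨⟨by rw [hc1]; exact hβ, by rw [hc1, hg]⟩, ⟨by rw [hc1]; exact hβ, by rw [hc1, hg]⟩,
      fun i hi _ => ?_⟩
    rw [coeff_linear] at hi
    subst hc
    rcases i with _ | _ | i <;> simp_all
  · rcases lt_trichotomy (w.v β) (w.v c) with hlt | heq | hgt
    · have hg : w.gauss (C β * X + C c) = w.v β := by
        refine w.gauss_eq' hne (fun i hi => ?_) ⟨1, by rw [hc1]; exact ⟨hβ, rfl⟩⟩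
        rw [coeff_linear] at hi
        rcases i with _ | _ | i <;> simp_all [le_of_lt hlt]
      rw [if_pos (Or.inr hlt), if_pos (Or.inr hlt.le)]
      refine ⟨⟨by rw [hc1]; exact hβ, by rw [hc1, hg]⟩, ⟨by rw [hc1]; exact hβ, by rw [hc1, hg]⟩,
        fun i hi hvi => ?_⟩
      rw [coeff_linear] at hi
      rw [hg] at hvi
      rcases i with _ | _ | i
      · rw [coeff_linear] at hvi; norm_num at hvi; exact absurd hvi.symm (ne_of_lt hlt)
      · omega
      · simp_all
    · have hg : w.gauss (C β * X + C c) = w.v β := by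
        refine w.gauss_eq' hne (fun i hi => ?_) ⟨1, by rw [hc1]; exact ⟨hβ, rfl⟩⟩
        rw [coeff_linear] at hi
        rcases i with _ | _ | i <;> simp_all [le_of_eq heq]
      have hβc : ¬ (c = 0 ∨ w.v β < w.v c) := by push_neg; exact ⟨hc, le_of_eq heq.symm⟩
      rw [if_neg hβc, if_pos (Or.inr heq.le)]
      refine ⟨⟨by rw [hc0]; exact hc, by rw [hc0, hg, heq]⟩,
        ⟨by rw [hc1]; exact hβ, by rw [hc1, hg]⟩, fun i hi hvi => ?_⟩
      rw [coeff_linear] at hi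
      rcases i with _ | _ | i <;> simp_all
    · have hg : w.gauss (C β * X + C c) = w.v c := by
        refine w.gauss_eq' hne (fun i hi => ?_) ⟨0, by rw [hc0]; exact ⟨hc, rfl⟩⟩
        rw [coeff_linear] at hi
        rcases i with _ | _ | i <;> simp_all [le_of_lt hgt]
      have hn1 : ¬ (c = 0 ∨ w.v β < w.v c) := by push_neg; exact ⟨hc, le_of_lt hgt⟩
      have hn2 : ¬ (c = 0 ∨ w.v β ≤ w.v c) := by push_neg; exact ⟨hc, hgt⟩
      rw [if_neg hn1, if_neg hn2]
      refine ⟨⟨by rw [hc0]; exact hc, by rw [hc0, hg]⟩, ⟨by rw [hc0]; exact hc, by rw [hc0, hg]⟩,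
        fun i hi hvi => ?_⟩
      rw [coeff_linear] at hi
      rw [hg] at hvi
      rcases i with _ | _ | i
      · omega
      · rw [coeff_linear] at hvi; norm_num at hvi; exact absurd hvi (ne_of_gt hgt)
      · simp_all

lemma minMax_prod (w : AddVal K) {β : K} (hβ : β ≠ 0) (S : Multiset K) :
    ((S.map fun c => C β * X + C c).prod ≠ 0) ∧
    MinMax w ((S.map fun c => C β * X + C c).prod)
      (Multiset.card (S.filter fun c => c = 0 ∨ w.v β < w.v c))
      (Multiset.card (S.filter fun c => c = 0 ∨ w.v β ≤ w.v c)) := by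
  classical
  induction S using Multiset.induction_on with
  | empty =>
    simp only [Multiset.map_zero, Multiset.prod_zero, Multiset.filter_zero, Multiset.card_zero]
    refine ⟨one_ne_zero, ?_⟩
    have hg : w.gauss (1 : K[X]) = w.v (1 : K) := by
      refine w.gauss_eq' one_ne_zero (fun i hi => ?_) ⟨0, ?_⟩
      · rw [Polynomial.coeff_one] at hi ⊢
        rcases i with _ | i <;> simp_all
      · simp [Polynomial.coeff_one]
    refine ⟨⟨by simp, by simp [hg]⟩, ⟨by simp, by simp [hg]⟩, fun i hi _ => ?_⟩
    rw [Polynomial.coeff_one] at hi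
    rcases i with _ | i <;> simp_all
  | cons c S ih =>
    rw [Multiset.map_cons, Multiset.prod_cons, Multiset.filter_cons, Multiset.filter_cons]
    obtain ⟨hlne, hlmm⟩ := minMax_linear w c hβ
    obtain ⟨hpne, hpmm⟩ := ih
    have := minMax_mul w hlne hpne hlmm hpmm
    refine ⟨this.1, ?_⟩
    convert this.2 using 2 <;> rw [Multiset.card_add] <;> split <;> simp [add_comm]


/-- Lemma 4.12: for a monic polynomial `h` over an algebraically closed
valued field, the lowest (resp. highest) degree appearing in a normalized reduction of
`h_{α,β}(x') = h(βx' + α)` — i.e. the least (resp. greatest) index whose coefficient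
attains the Gauss valuation — equals the number of roots `z` of `h`, counted with
multiplicity, with `v(z - α) > v(β)` (resp. `v(z - α) ≥ v(β)`); here a root `z = α`
satisfies both conditions (its "valuation" being `+∞`). -/
theorem statement7 {K : Type*} [Field K] [IsAlgClosed K] (w : AddVal K)
    (h : K[X]) (hmon : h.Monic) (α β : K) (hβ : β ≠ 0) :
    sInf {i : ℕ | (h.comp (C β * X + C α)).coeff i ≠ 0 ∧
        w.v ((h.comp (C β * X + C α)).coeff i) = w.gauss (h.comp (C β * X + C α))}
      = Multiset.card (h.roots.filter fun z => z = α ∨ w.v β < w.v (z - α)) ∧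
    sSup {i : ℕ | (h.comp (C β * X + C α)).coeff i ≠ 0 ∧
        w.v ((h.comp (C β * X + C α)).coeff i) = w.gauss (h.comp (C β * X + C α))}
      = Multiset.card (h.roots.filter fun z => z = α ∨ w.v β ≤ w.v (z - α)) := by
  classical
  have hsplit : h = (h.roots.map fun z => X - C z).prod :=
    (IsAlgClosed.splits h).eq_prod_roots_of_monic hmon
  have hcomp : h.comp (C β * X + C α)
      = (((h.roots.map fun z => α - z)).map fun c => C β * X + C c).prod := by
    conv_lhs => rw [hsplit]
    rw [Polynomial.multiset_prod_comp, Multiset.map_map, Multiset.map_map]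
    congr 1
    refine Multiset.map_congr rfl fun z _ => ?_
    simp only [Function.comp_apply, Polynomial.sub_comp, Polynomial.X_comp, Polynomial.C_comp]
    rw [Polynomial.C_sub]
    ring
  obtain ⟨hm, hn, hbd⟩ :=
    (minMax_prod w hβ (h.roots.map fun z => α - z)).2
  rw [← hcomp] at hm hn hbd
  -- card translations
  have hcard1 : Multiset.card ((h.roots.map fun z => α - z).filter
        fun c => c = 0 ∨ w.v β < w.v c)
      = Multiset.card (h.roots.filter fun z => z = α ∨ w.v β < w.v (z - α)) := by
    rw [← Multiset.countP_eq_card_filter, ← Multiset.countP_eq_card_filter,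
      Multiset.countP_map, ← Multiset.countP_eq_card_filter]
    refine Multiset.countP_congr rfl fun z _ => ?_
    by_cases hz : z = α
    · subst hz; simp
    · have hza : z - α ≠ 0 := sub_ne_zero.mpr hz
      have : w.v (α - z) = w.v (z - α) := by
        rw [show α - z = -(z - α) by ring, w.v_neg hza]
      simp only [sub_eq_zero, this, eq_iff_iff]
      constructor
      · rintro (h' | h')
        · exact absurd h'.symm hz
        · exact Or.inr h'
      · rintro (h' | h')
        · exact absurd h' hz
        · exact Or.inr h'
  have hcard2 : Multiset.card ((h.roots.map fun z => α - z).filter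
        fun c => c = 0 ∨ w.v β ≤ w.v c)
      = Multiset.card (h.roots.filter fun z => z = α ∨ w.v β ≤ w.v (z - α)) := by
    rw [← Multiset.countP_eq_card_filter, ← Multiset.countP_eq_card_filter,
      Multiset.countP_map, ← Multiset.countP_eq_card_filter]
    refine Multiset.countP_congr rfl fun z _ => ?_
    by_cases hz : z = α
    · subst hz; simp
    · have hza : z - α ≠ 0 := sub_ne_zero.mpr hz
      have : w.v (α - z) = w.v (z - α) := by
        rw [show α - z = -(z - α) by ring, w.v_neg hza]
      simp only [sub_eq_zero, this, eq_iff_iff]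
      constructor
      · rintro (h' | h')
        · exact absurd h'.symm hz
        · exact Or.inr h'
      · rintro (h' | h')
        · exact absurd h' hz
        · exact Or.inr h'
  rw [← hcard1, ← hcard2]
  set m := Multiset.card ((h.roots.map fun z => α - z).filter fun c => c = 0 ∨ w.v β < w.v c)
  set n := Multiset.card ((h.roots.map fun z => α - z).filter fun c => c = 0 ∨ w.v β ≤ w.v c)
  set A := {i : ℕ | (h.comp (C β * X + C α)).coeff i ≠ 0 ∧
      w.v ((h.comp (C β * X + C α)).coeff i) = w.gauss (h.comp (C β * X + C α))}
  have hmA : m ∈ A := hm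
  have hnA : n ∈ A := hn
  constructor
  · exact le_antisymm (Nat.sInf_le hmA)
      (le_csInf ⟨m, hmA⟩ fun i hi => (hbd i hi.1 hi.2).1)
  · exact le_antisymm
      (csSup_le ⟨m, hmA⟩ fun i hi => (hbd i hi.1 hi.2).2)
      (le_csSup ⟨n, fun i hi => (hbd i hi.1 hi.2).2⟩ hnA)
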